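/- Let σ be a primitive substitution on a finite alphabet and X_σ its associated shift. Then X_σ is linearly recurrent: there exists a constant C such that the recurrence function of its language satisfies R(n) ≤ Cn for all n ≥ 1. -/

import Mathlib

/-- The application of a substitution to a finite word. -/
def applyW {A : Type*} (σ : A → List A) (w : List A) : List A :=
  w.flatMap σ

/-- The language of a (primitive) substitution: the words occurring as factors of some
image `σ^m(i)` of a letter. -/
def substLanguage {A : Type*} (σ : A → List A) : Set (List A) :=
  {w | ∃ (m : ℕ) (i : A), w <:+: (applyW σ)^[m] [i]}

namespace LRaux

/-- iterated image of a letter -/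
def TT {A : Type*} (f : A → List A) (p : ℕ) (j : A) : List A :=
  (applyW f)^[p] [j]

variable {A : Type*} {f : A → List A}

lemma applyW_append (f : A → List A) (u v : List A) :
    applyW f (u ++ v) = applyW f u ++ applyW f v :=
  List.flatMap_append

lemma applyW_singleton (f : A → List A) (a : A) : applyW f [a] = f a :=
  List.flatMap_singleton f a

lemma iterate_applyW (f : A → List A) (m : ℕ) (w : List A) :
    (applyW f)^[m] w = applyW (TT f m) w := by
  induction m generalizing w with
  | zero =>
      show w = applyW (TT f 0) w
      exact (List.flatMap_singleton' w).symm
  | succ m ih =>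
      rw [Function.iterate_succ_apply, ih]
      show (applyW f w).flatMap (TT f m) = w.flatMap (TT f (m+1))
      rw [applyW]
      rw [List.flatMap_assoc]
      congr 1
      funext j
      show (f j).flatMap (TT f m) = TT f (m+1) j
      rw [TT, Function.iterate_succ_apply, applyW_singleton, ih]
      rfl

lemma TT_add (f : A → List A) (a b : ℕ) (j : A) :
    TT f (a + b) j = applyW (TT f a) (TT f b j) := by
  rw [TT, Function.iterate_add_apply, iterate_applyW]; rfl

lemma TT_succ (f : A → List A) (p : ℕ) (j : A) :
    TT f (p + 1) j = applyW (TT f p) (f j) := by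
  rw [TT_add, TT, Function.iterate_one, applyW_singleton]

lemma applyW_infix {u v : List A} (f : A → List A) (h : u <:+: v) :
    applyW f u <:+: applyW f v := by
  obtain ⟨s, t, rfl⟩ := h
  exact ⟨applyW f s, applyW f t, by rw [← applyW_append, ← applyW_append]⟩

lemma singleton_infix_of_mem {a : A} {l : List A} (h : a ∈ l) : [a] <:+: l := by
  obtain ⟨s, t, rfl⟩ := List.append_of_mem h
  exact ⟨s, t, by simp⟩

lemma TT_infix_of_mem (f : A → List A) (m : ℕ) {i : A} {u : List A} (h : i ∈ u) :
    TT f m i <:+: applyW (TT f m) u := by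
  have := applyW_infix (TT f m) (singleton_infix_of_mem h)
  rwa [applyW_singleton] at this

lemma applyW_ne_nil (hf : ∀ j, f j ≠ []) {u : List A} (hu : u ≠ []) :
    applyW f u ≠ [] := by
  cases u with
  | nil => exact absurd rfl hu
  | cons a u =>
      show (f a ++ u.flatMap f) ≠ []
      simp [hf a]

lemma TT_ne_nil (hf : ∀ j, f j ≠ []) (m : ℕ) : ∀ j, TT f m j ≠ [] := by
  induction m with
  | zero => intro j; simp [TT]
  | succ m ih => intro j; rw [TT_succ]; exact applyW_ne_nil ih (hf j)

lemma length_applyW_le {B : ℕ} (hB : ∀ j, (f j).length ≤ B) (u : List A) :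
    (applyW f u).length ≤ B * u.length := by
  induction u with
  | nil => simp [applyW]
  | cons a u ih =>
      rw [show applyW f (a :: u) = f a ++ applyW f u from rfl,
        List.length_append, List.length_cons, Nat.mul_succ]
      have := hB a
      omega

lemma le_length_applyW {b : ℕ} (hb : ∀ j, b ≤ (f j).length) (u : List A) :
    b * u.length ≤ (applyW f u).length := by
  induction u with
  | nil => simp [applyW]
  | cons a u ih =>
      rw [show applyW f (a :: u) = f a ++ applyW f u from rfl,
        List.length_append, List.length_cons, Nat.mul_succ]
      have := hb a
      omega

lemma infix_append_cases {w X Y : List A} (h : w <:+: X ++ Y) :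
    w <:+: X ∨ w <:+: Y ∨
      ∃ w1 w2, w = w1 ++ w2 ∧ w1 ≠ [] ∧ w2 ≠ [] ∧ w1 <:+ X ∧ w2 <+: Y := by
  obtain ⟨s, t, hst⟩ := h
  rw [List.append_assoc] at hst
  rcases List.append_eq_append_iff.mp hst with ⟨a', hX, hwt⟩ | ⟨c', hs, hY⟩
  · -- X = s ++ a', w ++ t = a' ++ Y
    rcases List.append_eq_append_iff.mp hwt with ⟨b', ha', ht⟩ | ⟨w2, hw, hY2⟩
    · -- a' = w ++ b'
      left
      exact ⟨s, b', by rw [hX, ha', List.append_assoc]⟩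
    · -- w = a' ++ w2, Y = w2 ++ t
      rcases eq_or_ne a' [] with rfl | ha
      · right; left
        exact ⟨[], t, by simp [hY2, hw]⟩
      · rcases eq_or_ne w2 [] with rfl | hw2
        · left
          exact ⟨s, [], by rw [hX, hw, List.append_nil, List.append_nil]⟩
        · right; right
          exact ⟨a', w2, hw, ha, hw2, ⟨s, hX.symm⟩, ⟨t, hY2.symm⟩⟩
  · -- s = X ++ c', Y = c' ++ w ++ t
    right; left
    exact ⟨c', t, by rw [hY, List.append_assoc]⟩

end LRaux

namespace LRaux
variable {A : Type*} {f : A → List A}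

/-- prefix desubstitution -/
lemma desub_prefix {b : ℕ} (hb : ∀ j, b ≤ (f j).length) :
    ∀ (u w : List A), w ≠ [] → w <+: applyW f u →
      ∃ u', u' <+: u ∧ b * (u'.length - 1) ≤ w.length ∧ w <+: applyW f u' := by
  intro u
  induction u with
  | nil =>
      intro w hw hpre
      rw [show applyW f ([] : List A) = [] from rfl] at hpre
      exact absurd (List.prefix_nil.mp hpre) hw
  | cons a u ih =>
      intro w hw hpre
      rw [show applyW f (a :: u) = f a ++ applyW f u from rfl] at hpre
      by_cases hlen : w.length ≤ (f a).length
      · -- w is a prefix of f a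
        have hfa : f a <+: f a ++ applyW f u := ⟨applyW f u, rfl⟩
        have : w <+: f a := by
          rcases List.prefix_or_prefix_of_prefix hpre hfa with h | h
          · exact h
          · obtain ⟨t, ht⟩ := h
            have h0 := congrArg List.length ht
            rw [List.length_append] at h0
            have : t = [] := List.eq_nil_of_length_eq_zero (by omega)
            rw [← ht, this, List.append_nil]
        refine ⟨[a], ⟨u, rfl⟩, ?_, ?_⟩
        · simp
        · rw [show applyW f [a] = f a ++ [] from rfl, List.append_nil]
          exact this
      · -- f a is a proper prefix of w
        push_neg at hlen
        have hfa : f a <+: f a ++ applyW f u := ⟨applyW f u, rfl⟩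
        have hfw : f a <+: w := by
          rcases List.prefix_or_prefix_of_prefix hpre hfa with h | h
          · exact absurd (h.length_le) (by omega)
          · exact h
        obtain ⟨w', rfl⟩ := hfw
        have hw' : w' ≠ [] := by
          intro h
          rw [h, List.append_nil] at hlen
          omega
        have hw'pre : w' <+: applyW f u := by
          obtain ⟨t, ht⟩ := hpre
          rw [List.append_assoc] at ht
          exact ⟨t, List.append_cancel_left ht⟩
        obtain ⟨u'', hu''pre, hu''len, hu''⟩ := ih w' hw' hw'pre
        refine ⟨a :: u'', List.cons_prefix_cons.mpr ⟨rfl, hu''pre⟩, ?_, ?_⟩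
        · have h1 := hb a
          rw [List.length_append, List.length_cons, Nat.add_sub_cancel]
          have h3 : b * u''.length ≤ b * (u''.length - 1) + b := by
            calc b * u''.length ≤ b * ((u''.length - 1) + 1) :=
                  Nat.mul_le_mul_left _ (by omega)
              _ = b * (u''.length - 1) + b := by rw [Nat.mul_succ]
          omega
        · obtain ⟨t, ht⟩ := hu''
          exact ⟨t, by rw [show applyW f (a :: u'') = f a ++ applyW f u'' from rfl,
            List.append_assoc, ht]⟩

/-- infix desubstitution -/
lemma desub_infix {b : ℕ} (hb : ∀ j, b ≤ (f j).length) :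
    ∀ (u w : List A), w ≠ [] → w <:+: applyW f u →
      ∃ u', u' <:+: u ∧ b * (u'.length - 2) ≤ w.length ∧ w <:+: applyW f u' := by
  intro u
  induction u with
  | nil =>
      intro w hw hinf
      rw [show applyW f ([] : List A) = [] from rfl] at hinf
      exact absurd (List.eq_nil_of_infix_nil hinf) hw
  | cons a u ih =>
      intro w hw hinf
      rw [show applyW f (a :: u) = f a ++ applyW f u from rfl] at hinf
      rcases infix_append_cases hinf with h | h | ⟨w1, w2, rfl, hw1, hw2, hs, hp⟩
      · refine ⟨[a], ⟨[], u, by simp⟩, by simp, ?_⟩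
        rw [show applyW f [a] = f a ++ [] from rfl, List.append_nil]
        exact h
      · obtain ⟨u', h1, h2, h3⟩ := ih w hw h
        exact ⟨u', h1.trans (List.infix_cons (List.infix_refl u)), h2, h3⟩
      · obtain ⟨u'', hu''pre, hu''len, hu''⟩ := desub_prefix hb u w2 hw2 hp
        refine ⟨a :: u'', (List.cons_prefix_cons.mpr ⟨rfl, hu''pre⟩).isInfix, ?_, ?_⟩
        · rw [List.length_cons, List.length_append]
          have h4 : b * ((u''.length + 1) - 2) = b * (u''.length - 1) := rfl
          omega
        · obtain ⟨x, hx⟩ := hs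
          obtain ⟨y, hy⟩ := hu''
          refine ⟨x, y, ?_⟩
          rw [show applyW f (a :: u'') = f a ++ applyW f u'' from rfl, ← hx, ← hy]
          simp [List.append_assoc]

end LRaux

namespace LRaux
variable {A : Type*} {f : A → List A}

/-- a long enough infix of an image contains a full block -/
lemma contains_block {B : ℕ} (hB : ∀ j, (f j).length ≤ B) :
    ∀ (u v : List A), v <:+: applyW f u → 2 * B < v.length →
      ∃ j ∈ u, f j <:+: v := by
  intro u
  induction u with
  | nil =>
      intro v hv hlen
      rw [show applyW f ([] : List A) = [] from rfl] at hv
      rw [List.eq_nil_of_infix_nil hv] at hlen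
      simp at hlen
  | cons a u ih =>
      intro v hv hlen
      rw [show applyW f (a :: u) = f a ++ applyW f u from rfl] at hv
      rcases infix_append_cases hv with h | h | ⟨v1, v2, rfl, hv1, hv2, hs, hp⟩
      · have := h.length_le
        have := hB a
        omega
      · obtain ⟨j, hj, hjv⟩ := ih v h hlen
        exact ⟨j, List.mem_cons_of_mem a hj, hjv⟩
      · -- v = v1 ++ v2, v1 suffix of f a, v2 prefix of applyW f u
        have hlen1 : v1.length ≤ B := le_trans hs.length_le (hB a)
        have hlen2 : B < v2.length := by
          rw [List.length_append] at hlen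
          omega
        cases u with
        | nil =>
            exfalso
            rw [show applyW f ([] : List A) = [] from rfl, List.prefix_nil] at hp
            exact hv2 hp
        | cons b u' =>
            rw [show applyW f (b :: u') = f b ++ applyW f u' from rfl] at hp
            have hfb : f b <+: f b ++ applyW f u' := ⟨applyW f u', rfl⟩
            have : f b <+: v2 := by
              rcases List.prefix_or_prefix_of_prefix hp hfb with h | h
              · exact absurd h.length_le (by have := hB b; omega)
              · exact h
            refine ⟨b, List.mem_cons_of_mem a List.mem_cons_self, ?_⟩
            exact this.isInfix.trans ⟨v1, [], by simp⟩

/-- padding up: the image of any letter occurs in any deeper image -/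
lemma TT_pad (hprim : ∀ i j : A, i ∈ f j) (p q : ℕ) (j j' : A) :
    TT f p j <:+: TT f (p + q + 1) j' := by
  induction q generalizing j' with
  | zero =>
      rw [TT_succ]
      exact TT_infix_of_mem f p (hprim j j')
  | succ q ih =>
      have h1 := TT_infix_of_mem f (p + q + 1) (hprim j j')
      rw [← TT_succ] at h1
      exact (ih j).trans h1

end LRaux

namespace LRaux
variable {A : Type*} {σ : A → List A}

lemma TT_TT (σ : A → List A) (k p : ℕ) (i : A) :
    TT (TT σ k) p i = TT σ (p * k) i := by
  induction p with
  | zero => simp [TT]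
  | succ p ih =>
      have h1 : TT (TT σ k) (p + 1) i = applyW (TT σ k) (TT (TT σ k) p i) := by
        rw [TT, Function.iterate_succ_apply', ← TT]
      rw [h1, ih, ← iterate_applyW]
      show (applyW σ)^[k] ((applyW σ)^[p * k] [i]) = (applyW σ)^[(p + 1) * k] [i]
      rw [← Function.iterate_add_apply]
      congr 1
      ring

lemma prim_ext (hne : ∀ b, σ b ≠ []) {k : ℕ}
    (hk : ∀ i j : A, i ∈ (applyW σ)^[k] [j]) :
    ∀ (e : ℕ) (i j : A), i ∈ TT σ (k + e) j := by
  intro e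
  induction e with
  | zero => intro i j; exact hk i j
  | succ e ih =>
      intro i j
      have h1 : TT σ (k + (e + 1)) j = applyW (TT σ (k + e)) (σ j) := by
        rw [show k + (e + 1) = (k + e) + 1 by ring, TT_succ]
      obtain ⟨j', hj'⟩ := List.exists_mem_of_ne_nil (σ j) (hne j)
      have h2 : TT σ (k + e) j' <:+: applyW (TT σ (k + e)) (σ j) :=
        TT_infix_of_mem _ _ hj'
      rw [← h1] at h2
      exact h2.subset (ih i j')

/-- every language word is an infix of some `TT (TT σ k) p i` -/
lemma cover (hne : ∀ b, σ b ≠ []) {k : ℕ} (hkpos : 0 < k)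
    (hk : ∀ i j : A, i ∈ (applyW σ)^[k] [j]) (j₀ : A)
    {w : List A} (hw : w ∈ substLanguage σ) :
    ∃ p i, w <:+: TT (TT σ k) p i := by
  obtain ⟨m, i, hwi⟩ := hw
  rw [← TT] at hwi
  set e : ℕ := k - m % k with he
  set p : ℕ := m / k + 2 with hp
  have harith : m + (k + e) = p * k := by
    have h1 := Nat.div_add_mod m k
    have h2 : m % k < k := Nat.mod_lt m hkpos
    have h3 : p * k = (m / k) * k + 2 * k := by rw [hp, Nat.add_mul]
    have h4 : (m / k) * k = k * (m / k) := Nat.mul_comm _ _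
    omega
  have hmem : i ∈ TT σ (k + e) j₀ := prim_ext hne hk e i j₀
  have h5 : TT σ m i <:+: TT σ (m + (k + e)) j₀ := by
    show TT σ m i <:+: (applyW σ)^[m + (k + e)] [j₀]
    rw [Function.iterate_add_apply, iterate_applyW]
    exact TT_infix_of_mem _ _ hmem
  refine ⟨p, j₀, ?_⟩
  rw [TT_TT, ← harith]
  exact hwi.trans h5

lemma mem_language_of_infix_TT {k p : ℕ} {i : A} {u : List A}
    (h : u <:+: TT (TT σ k) p i) : u ∈ substLanguage σ := by
  rw [TT_TT] at h
  exact ⟨p * k, i, h⟩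

end LRaux

namespace LRaux
variable {A : Type*}

lemma two_le_length_of_mem {a b : A} {l : List A} (ha : a ∈ l) (hb : b ∈ l)
    (hab : a ≠ b) : 2 ≤ l.length := by
  match l with
  | [] => simp at ha
  | [c] =>
      rw [List.mem_singleton] at ha hb
      exact absurd (ha.trans hb.symm) hab
  | c :: c' :: l' => simp [List.length_cons]

/-- minimum length of the level-`p` images -/
noncomputable def mnT (f : A → List A) (p : ℕ) : ℕ :=
  sInf (Set.range fun j => (TT f p j).length)

/-- maximum length of the level-`p` images -/
def MxT [Fintype A] (f : A → List A) (p : ℕ) : ℕ :=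
  Finset.univ.sup fun j => (TT f p j).length

lemma mnT_le (f : A → List A) (p : ℕ) (j : A) : mnT f p ≤ (TT f p j).length :=
  Nat.sInf_le ⟨j, rfl⟩

lemma exists_mnT [Nonempty A] (f : A → List A) (p : ℕ) :
    ∃ j, (TT f p j).length = mnT f p :=
  Nat.sInf_mem (Set.range_nonempty _)

lemma le_MxT [Fintype A] (f : A → List A) (p : ℕ) (j : A) :
    (TT f p j).length ≤ MxT f p :=
  Finset.le_sup (f := fun j => (TT f p j).length) (Finset.mem_univ j)

lemma MxT_le [Fintype A] {f : A → List A} {p B : ℕ}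
    (h : ∀ j, (TT f p j).length ≤ B) : MxT f p ≤ B :=
  Finset.sup_le fun j _ => h j

lemma mn_le_Mx [Fintype A] [Nonempty A] (f : A → List A) (p : ℕ) :
    mnT f p ≤ MxT f p := by
  obtain ⟨j, hj⟩ := exists_mnT f p
  exact hj ▸ le_MxT f p j

lemma one_le_mnT [Nonempty A] {f : A → List A} (hne : ∀ j, f j ≠ []) (p : ℕ) :
    1 ≤ mnT f p := by
  obtain ⟨j, hj⟩ := exists_mnT f p
  rw [← hj]
  have := TT_ne_nil hne p j
  exact List.length_pos_iff.mpr this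

lemma TT_one (f : A → List A) (j : A) : TT f 1 j = f j := by
  rw [TT, Function.iterate_one, applyW_singleton]

section facts
variable [Fintype A] [Nonempty A] {f : A → List A}

lemma Mx_le_mn_succ (hprim : ∀ i j : A, i ∈ f j) (p : ℕ) :
    MxT f p ≤ mnT f (p + 1) := by
  obtain ⟨j, hj⟩ := exists_mnT f (p + 1)
  refine MxT_le fun i => ?_
  have h1 : TT f p i <:+: TT f (p + 1) j := by
    rw [TT_succ]
    exact TT_infix_of_mem f p (hprim i j)
  exact le_trans h1.length_le (le_of_eq hj)

lemma Mx_succ_le (p : ℕ) : MxT f (p + 1) ≤ MxT f p * MxT f 1 := by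
  refine MxT_le fun j => ?_
  rw [TT_succ]
  calc (applyW (TT f p) (f j)).length ≤ MxT f p * (f j).length :=
        length_applyW_le (le_MxT f p) (f j)
    _ ≤ MxT f p * MxT f 1 := by
        have : (f j).length ≤ MxT f 1 := by
          rw [← TT_one f j]; exact le_MxT f 1 j
        exact Nat.mul_le_mul_left _ this

lemma Mx_add_le (a b : ℕ) : MxT f (a + b) ≤ (MxT f 1) ^ a * MxT f b := by
  induction a with
  | zero => simpa using le_rfl
  | succ a ih =>
      have h1 : MxT f (a + 1 + b) ≤ MxT f (a + b) * MxT f 1 := by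
        rw [show a + 1 + b = (a + b) + 1 by ring]
        exact Mx_succ_le (a + b)
      calc MxT f (a + 1 + b) ≤ MxT f (a + b) * MxT f 1 := h1
        _ ≤ ((MxT f 1) ^ a * MxT f b) * MxT f 1 := Nat.mul_le_mul_right _ ih
        _ = (MxT f 1) ^ (a + 1) * MxT f b := by ring

lemma Mx_le_L_mul_mn (hprim : ∀ i j : A, i ∈ f j) (hne : ∀ j, f j ≠ []) (p : ℕ) :
    MxT f p ≤ MxT f 1 * mnT f p := by
  induction p with
  | zero =>
      have h1 : MxT f 0 ≤ 1 := MxT_le fun j => by simp [TT]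
      have h2 : 1 ≤ MxT f 1 := by
        obtain ⟨j⟩ := ‹Nonempty A›
        calc 1 ≤ (f j).length := List.length_pos_iff.mpr (hne j)
          _ = (TT f 1 j).length := by rw [TT_one]
          _ ≤ MxT f 1 := le_MxT f 1 j
      have h3 := one_le_mnT hne (f := f) 0
      calc MxT f 0 ≤ 1 := h1
        _ ≤ MxT f 1 * mnT f 0 := Nat.one_le_iff_ne_zero.mpr (by positivity)
  | succ p ih =>
      calc MxT f (p + 1) ≤ MxT f p * MxT f 1 := Mx_succ_le p
        _ ≤ mnT f (p + 1) * MxT f 1 := Nat.mul_le_mul_right _ (Mx_le_mn_succ hprim p)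
        _ = MxT f 1 * mnT f (p + 1) := Nat.mul_comm _ _

lemma two_pow_le_mnT (h2 : ∀ j, 2 ≤ (f j).length) (hne : ∀ j, f j ≠ []) (p : ℕ) :
    2 ^ p ≤ mnT f p := by
  induction p with
  | zero => simpa using one_le_mnT hne 0
  | succ p ih =>
      obtain ⟨j, hj⟩ := exists_mnT f (p + 1)
      rw [← hj, TT_succ]
      calc 2 ^ (p + 1) = 2 ^ p * 2 := by ring
        _ ≤ mnT f p * (f j).length := Nat.mul_le_mul ih (h2 j)
        _ ≤ (applyW (TT f p) (f j)).length := by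
            have := le_length_applyW (b := mnT f p) (mnT_le f p) (f j)
            calc mnT f p * (f j).length = mnT f p * (f j).length := rfl
              _ ≤ (applyW (TT f p) (f j)).length := this

end facts
end LRaux

namespace LRaux

theorem aux {d : ℕ} (hd : 2 ≤ d) (σ : Fin d → List (Fin d)) (hne : ∀ b, σ b ≠ [])
    (k : ℕ) (hk : ∀ i j : Fin d, i ∈ (applyW σ)^[k] [j]) :
    ∃ C : ℕ, 0 < C ∧ ∀ n, 1 ≤ n →
      ∀ v ∈ substLanguage σ, C * n ≤ v.length →
        ∀ w ∈ substLanguage σ, w.length = n → w <:+: v := by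
  classical
  haveI : Nonempty (Fin d) := ⟨⟨0, by omega⟩⟩
  set i0 : Fin d := ⟨0, by omega⟩ with hi0
  set i1 : Fin d := ⟨1, by omega⟩ with hi1
  have h01 : i0 ≠ i1 := by
    intro h
    have := congrArg Fin.val h
    simp [hi0, hi1] at this
  -- k is positive
  have hkpos : 0 < k := by
    rcases Nat.eq_zero_or_pos k with rfl | h
    · have := hk i0 i1
      simp at this
      exact absurd this h01
    · exact h
  set f : Fin d → List (Fin d) := TT σ k with hf
  have hprimf : ∀ i j : Fin d, i ∈ f j := fun i j => hk i j
  have hnef : ∀ j, f j ≠ [] := fun j => TT_ne_nil hne k j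
  have h2f : ∀ j, 2 ≤ (f j).length := fun j =>
    two_le_length_of_mem (hprimf i0 j) (hprimf i1 j) h01
  set L : ℕ := MxT f 1 with hL
  have hL1 : 1 ≤ L := by
    calc 1 ≤ (f i0).length := by have := h2f i0; omega
      _ = (TT f 1 i0).length := by rw [TT_one]
      _ ≤ L := le_MxT f 1 i0
  -- the constant K bounding the lengths of desubstituted words
  set K : ℕ := L ^ 2 + 2 with hK
  -- choose Q such that every language word of length ≤ K is an infix of every TT f Q j
  set q : List (Fin d) → ℕ :=
    fun u => if h : ∃ p i, u <:+: TT f p i then h.choose else 0 with hq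
  set S : Finset (List (Fin d)) := (List.finite_length_le (Fin d) K).toFinset with hS
  set Q : ℕ := S.sup q + 1 with hQdef
  have hQ : ∀ u ∈ substLanguage σ, u.length ≤ K → ∀ j, u <:+: TT f Q j := by
    intro u hu hulen j
    have hex : ∃ p i, u <:+: TT f p i := by
      obtain ⟨p, i, h⟩ := cover hne hkpos hk i0 hu
      exact ⟨p, i, by rw [hf]; exact h⟩
    obtain ⟨i, hi⟩ := hex.choose_spec
    have hqu : q u = hex.choose := by rw [hq]; exact dif_pos hex
    have huS : u ∈ S := by
      rw [hS, Set.Finite.mem_toFinset]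
      exact hulen
    have hle : q u ≤ S.sup q := Finset.le_sup huS
    have hpad := TT_pad hprimf (q u) (S.sup q - q u) i j
    rw [show q u + (S.sup q - q u) + 1 = Q from by omega] at hpad
    rw [← hqu] at hi
    exact hi.trans hpad
  -- the constant
  refine ⟨2 * L ^ (Q + 2) + 1, by positivity, ?_⟩
  intro n hn v hv hvlen w hw hwlen
  -- choose the level s
  have hH : ∃ p, n ≤ mnT f p :=
    ⟨n, le_trans (le_of_lt (Nat.lt_two_pow_self (n := n))) (two_pow_le_mnT h2f hnef n)⟩
  set r : ℕ := Nat.find hH with hr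
  set s : ℕ := r - 1 with hs
  have hmnpos : ∀ p, 1 ≤ mnT f p := one_le_mnT hnef
  have hsn : mnT f s ≤ n := by
    rcases Nat.eq_zero_or_pos r with h0 | h0
    · have : mnT f s ≤ (TT f s i0).length := mnT_le f s i0
      have hs0 : s = 0 := by omega
      rw [hs0] at this ⊢
      simpa [TT] using le_trans this (by simp [TT]; omega)
    · have := Nat.find_min hH (show r - 1 < r by omega)
      rw [← hs] at this
      omega
  have hns : n ≤ L ^ 2 * mnT f s := by
    rcases Nat.eq_zero_or_pos r with h0 | h0
    · have h1 : n ≤ mnT f r := Nat.find_spec hH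
      have h2 : mnT f r ≤ (TT f r i0).length := mnT_le f r i0
      have h3 : (TT f 0 i0).length = 1 := by simp [TT]
      have h4 : n ≤ 1 := by rw [h0] at h1 h2; rw [h3] at h2; omega
      calc n ≤ 1 := h4
        _ ≤ L ^ 2 * mnT f s := by
            have := hmnpos s
            have : 1 * 1 ≤ L ^ 2 * mnT f s :=
              Nat.mul_le_mul (Nat.one_le_pow _ _ (by omega)) this
            omega
    · have h1 : n ≤ mnT f r := Nat.find_spec hH
      have h2 : mnT f r ≤ MxT f r := mn_le_Mx f r
      have h3 : MxT f r ≤ MxT f s * L := by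
        rw [show r = s + 1 from by omega]
        exact Mx_succ_le s
      have h4 : MxT f s ≤ L * mnT f s := Mx_le_L_mul_mn hprimf hnef s
      have h5 : MxT f s * L ≤ (L * mnT f s) * L := Nat.mul_le_mul_right _ h4
      have h6 : (L * mnT f s) * L = L ^ 2 * mnT f s := by ring
      omega
  -- desubstitute w at level s
  obtain ⟨p₀, ii, hw0⟩ := cover hne hkpos hk i0 hw
  rw [← hf] at hw0
  have hw1 : w <:+: TT f (p₀ + s + 1) ii := hw0.trans (TT_pad hprimf p₀ s ii ii)
  set p : ℕ := p₀ + s + 1 with hp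
  have hdecomp : TT f p ii = applyW (TT f s) (TT f (p - s) ii) := by
    rw [← TT_add, show s + (p - s) = p from by omega]
  rw [hdecomp] at hw1
  have hwne : w ≠ [] := by
    intro h
    rw [h] at hwlen
    simp at hwlen
    omega
  obtain ⟨u', hu'inf, hu'len, hwu'⟩ :=
    desub_infix (f := TT f s) (b := mnT f s) (mnT_le f s) (TT f (p - s) ii) w hwne hw1
  rw [hwlen] at hu'len
  have hu'K : u'.length ≤ K := by
    have h1 : mnT f s * (u'.length - 2) ≤ mnT f s * L ^ 2 := by
      calc mnT f s * (u'.length - 2) ≤ n := hu'len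
        _ ≤ L ^ 2 * mnT f s := hns
        _ = mnT f s * L ^ 2 := Nat.mul_comm _ _
    have h2 : u'.length - 2 ≤ L ^ 2 :=
      Nat.le_of_mul_le_mul_left h1 (hmnpos s)
    omega
  have hu'lang : u' ∈ substLanguage σ := by
    refine mem_language_of_infix_TT (k := k) (p := p - s) (i := ii) ?_
    rw [← hf]
    exact hu'inf
  have hwT : ∀ j, w <:+: TT f (s + Q) j := by
    intro j
    have h1 : u' <:+: TT f Q j := hQ u' hu'lang hu'K j
    have h2 : applyW (TT f s) u' <:+: applyW (TT f s) (TT f Q j) :=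
      applyW_infix _ h1
    rw [← TT_add] at h2
    exact hwu'.trans h2
  -- find a full block in v
  set m : ℕ := s + Q with hm
  obtain ⟨p₁, I₁, hv0⟩ := cover hne hkpos hk i0 hv
  rw [← hf] at hv0
  have hv1 : v <:+: TT f (p₁ + m + 1) I₁ := hv0.trans (TT_pad hprimf p₁ m I₁ I₁)
  set P : ℕ := p₁ + m + 1 with hP
  have hdecompv : TT f P I₁ = applyW (TT f (m + 1)) (TT f (P - (m + 1)) I₁) := by
    rw [← TT_add, show (m + 1) + (P - (m + 1)) = P from by omega]
  rw [hdecompv] at hv1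
  have hMx : MxT f (m + 1) ≤ L ^ (Q + 2) * n := by
    have h1 : MxT f (m + 1) ≤ L ^ (Q + 1) * MxT f s := by
      rw [show m + 1 = (Q + 1) + s from by omega]
      exact Mx_add_le (Q + 1) s
    have h2 : MxT f s ≤ L * mnT f s := Mx_le_L_mul_mn hprimf hnef s
    have h3 : L * mnT f s ≤ L * n := Nat.mul_le_mul_left _ hsn
    have h4 : L ^ (Q + 1) * MxT f s ≤ L ^ (Q + 1) * (L * n) :=
      Nat.mul_le_mul_left _ (le_trans h2 h3)
    have h5 : L ^ (Q + 1) * (L * n) = L ^ (Q + 2) * n := by ring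
    omega
  have hvlong : 2 * MxT f (m + 1) < v.length := by
    have h1 : (2 * L ^ (Q + 2) + 1) * n = 2 * (L ^ (Q + 2) * n) + n := by ring
    omega
  obtain ⟨j₀, hj₀mem, hblk⟩ :=
    contains_block (B := MxT f (m + 1)) (le_MxT f (m + 1))
      (TT f (P - (m + 1)) I₁) v hv1 hvlong
  -- conclude
  have hfin : TT f m i0 <:+: TT f (m + 1) j₀ := by
    rw [TT_succ]
    exact TT_infix_of_mem f m (hprimf i0 j₀)
  exact (hwT i0).trans (hfin.trans hblk)

end LRaux

/-- A primitive substitution is linearly recurrent: there is a constant `C` such that every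
word of the language of length at least `C·n` contains every word of the language of
length `n` as a factor (i.e. the recurrence function satisfies `R(n) ≤ C·n`). -/
theorem primitive_substitution_linearly_recurrent (d : ℕ)
    (σ : Fin d → List (Fin d)) (hne : ∀ b, σ b ≠ [])
    (hprim : ∃ k : ℕ, ∀ i j : Fin d, i ∈ (applyW σ)^[k] [j]) :
    ∃ C : ℕ, 0 < C ∧ ∀ n, 1 ≤ n →
      ∀ v ∈ substLanguage σ, C * n ≤ v.length →
        ∀ w ∈ substLanguage σ, w.length = n → w <:+: v := by
  obtain ⟨k, hk⟩ := hprim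
  rcases lt_or_ge d 2 with hd | hd
  · -- degenerate case: at most one letter
    refine ⟨1, one_pos, ?_⟩
    intro n hn v hv hvlen w hw hwlen
    have hsub : ∀ x y : Fin d, x = y := by
      intro x y
      have hx := x.isLt
      have hy := y.isLt
      apply Fin.ext
      omega
    have htake : w = v.take n := by
      apply List.ext_getElem
      · rw [List.length_take]
        omega
      · intro i h1 h2
        exact hsub _ _
    rw [htake]
    exact (List.take_prefix n v).isInfix
  · exact LRaux.aux hd σ hne k hk
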